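/- Let L : (0,∞) → (0,∞) be measurable and a ∈ ℝ with ∫_0^∞ t^{-a-1} L(t) dt = 1/K for some K ∈ (0,∞). Then as τ → 0⁺, ∫_0^1 u^{a-1/2} (1-u)^{-a-1} L((1/τ²)(1/u - 1)) du = K^{-1} τ^{-2a} (1+o(1)); equivalently, τ^{2a} ∫_0^1 u^{a-1/2} (1-u)^{-a-1} L((1/τ²)(1/u - 1)) du → 1/K as τ → 0⁺. -/

import Mathlib

open MeasureTheory Filter Set Topology

/-- Lemma A.5: if `∫_0^∞ t^(-a-1) L(t) dt = 1/K`, then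
`τ^(2a) ∫_0^1 u^(a-1/2) (1-u)^(-a-1) L((1/τ²)(1/u - 1)) du → 1/K` as `τ → 0⁺`. -/
theorem key_lemma_A5 (L : ℝ → ℝ) (a K : ℝ) (hK : 0 < K)
    (hLmeas : Measurable L)
    (hLpos : ∀ t > 0, 0 < L t)
    (hint : IntegrableOn (fun t => t ^ (-a - 1) * L t) (Ioi (0:ℝ)))
    (heq : ∫ t in Ioi (0:ℝ), t ^ (-a - 1) * L t = 1 / K) :
    Tendsto
      (fun τ : ℝ =>
        τ ^ (2 * a) *
          ∫ u in Ioo (0:ℝ) 1,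
            u ^ (a - 1/2) * (1 - u) ^ (-a - 1) * L ((1 / τ ^ 2) * (1 / u - 1)))
      (𝓝[>] 0) (𝓝 (1 / K)) := by
  have hmain : Tendsto (fun τ : ℝ => ∫ t in Ioi (0:ℝ),
      t ^ (-a - 1) * (1 + τ ^ 2 * t) ^ (-(1:ℝ)/2) * L t) (𝓝[>] (0:ℝ)) (𝓝 (1 / K)) := by
    rw [← heq]
    apply tendsto_integral_filter_of_dominated_convergence (fun t => t ^ (-a - 1) * L t)
    · filter_upwards with τ
      have hm1 : Measurable fun t : ℝ => t ^ (-a - 1) := by measurability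
      have hm2 : Measurable fun x : ℝ => x ^ (-(1:ℝ)/2) := by measurability
      have hm3 : Measurable fun t : ℝ => 1 + τ ^ 2 * t :=
        measurable_const.add (measurable_const.mul measurable_id)
      exact ((hm1.mul (hm2.comp hm3)).mul hLmeas).aestronglyMeasurable
    · filter_upwards [self_mem_nhdsWithin] with τ (hτ : 0 < τ)
      rw [ae_restrict_iff' measurableSet_Ioi]
      filter_upwards with t (ht : 0 < t)
      have h1 : (1:ℝ) ≤ 1 + τ ^ 2 * t := by nlinarith
      have h2 : (1 + τ ^ 2 * t) ^ (-(1:ℝ)/2) ≤ 1 :=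
        Real.rpow_le_one_of_one_le_of_nonpos h1 (by norm_num)
      have h3 : 0 ≤ (1 + τ ^ 2 * t) ^ (-(1:ℝ)/2) := Real.rpow_nonneg (by linarith) _
      have h4 : 0 < t ^ (-a - 1) := Real.rpow_pos_of_pos ht _
      have h5 : 0 < L t := hLpos t ht
      rw [Real.norm_eq_abs, abs_of_nonneg (by positivity)]
      exact mul_le_mul_of_nonneg_right (mul_le_of_le_one_right h4.le h2) h5.le
    · exact hint
    · rw [ae_restrict_iff' measurableSet_Ioi]
      filter_upwards with t (ht : 0 < t)
      have h1 : Tendsto (fun τ : ℝ => 1 + τ ^ 2 * t) (𝓝[>] 0) (𝓝 1) := by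
        have : Tendsto (fun τ : ℝ => 1 + τ ^ 2 * t) (𝓝 0) (𝓝 (1 + 0 ^ 2 * t)) :=
          (continuous_const.add ((continuous_pow 2).mul continuous_const)).tendsto 0
        simpa using this.mono_left nhdsWithin_le_nhds
      have h2 : Tendsto (fun τ : ℝ => (1 + τ ^ 2 * t) ^ (-(1:ℝ)/2)) (𝓝[>] 0) (𝓝 1) := by
        have := (Real.continuousAt_rpow_const 1 (-(1:ℝ)/2) (Or.inl one_ne_zero)).tendsto.comp h1
        simpa [Real.one_rpow, Function.comp_def] using this
      have h3 : Tendsto (fun τ : ℝ => t ^ (-a - 1) * (1 + τ ^ 2 * t) ^ (-(1:ℝ)/2) * L t)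
          (𝓝[>] 0) (𝓝 (t ^ (-a - 1) * 1 * L t)) :=
        (tendsto_const_nhds.mul h2).mul tendsto_const_nhds
      simpa using h3
  apply hmain.congr'
  filter_upwards [self_mem_nhdsWithin] with τ (hτ : 0 < τ)
  have hτ2 : (0:ℝ) < τ ^ 2 := by positivity
  set f : ℝ → ℝ := fun u => (1 / τ ^ 2) * (1 / u - 1) with hf
  set f' : ℝ → ℝ := fun u => -(1 / (τ ^ 2 * u ^ 2)) with hf'
  have himg : f '' Ioo 0 1 = Ioi (0:ℝ) := by
    ext t
    simp only [mem_image, mem_Ioo, mem_Ioi]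
    constructor
    · rintro ⟨u, ⟨hu0, hu1⟩, rfl⟩
      have h1u : (0:ℝ) < 1 - u := by linarith
      have : (1 / τ ^ 2) * (1 / u - 1) = (1 - u) / (τ ^ 2 * u) := by
        field_simp
      rw [hf]; dsimp only; rw [this]; positivity
    · intro ht
      have hpos : (0:ℝ) < 1 + τ ^ 2 * t := by positivity
      refine ⟨1 / (1 + τ ^ 2 * t), ⟨by positivity, ?_⟩, ?_⟩
      · rw [div_lt_one hpos]; nlinarith
      · rw [hf]; dsimp only; rw [one_div_one_div]; field_simp; ring
  have hderiv : ∀ u ∈ Ioo (0:ℝ) 1, HasDerivWithinAt f (f' u) (Ioo (0:ℝ) 1) u := by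
    intro u hu
    have hu0 : u ≠ 0 := ne_of_gt hu.1
    have h : HasDerivAt (fun x : ℝ => (1 / τ ^ 2) * (x⁻¹ - 1)) ((1 / τ ^ 2) * -(u ^ 2)⁻¹) u :=
      ((hasDerivAt_inv hu0).sub_const 1).const_mul _
    have heq2 : (1 / τ ^ 2) * -(u ^ 2)⁻¹ = f' u := by rw [hf']; field_simp
    have : HasDerivAt f (f' u) u := by
      rw [← heq2]
      convert h using 2 with x
      rw [hf]
      simp [one_div]
    exact this.hasDerivWithinAt
  have hinj : InjOn f (Ioo (0:ℝ) 1) := by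
    intro u hu v hv h
    rw [hf] at h
    have h' : 1 / u - 1 = 1 / v - 1 :=
      mul_left_cancel₀ (by positivity : (1 / τ ^ 2 : ℝ) ≠ 0) h
    have hu0 : u ≠ 0 := ne_of_gt hu.1
    have hv0 : v ≠ 0 := ne_of_gt hv.1
    have : 1 / u = 1 / v := by linarith
    field_simp at this
    linarith
  calc ∫ t in Ioi (0:ℝ), t ^ (-a - 1) * (1 + τ ^ 2 * t) ^ (-(1:ℝ)/2) * L t
      = ∫ t in f '' Ioo (0:ℝ) 1, t ^ (-a - 1) * (1 + τ ^ 2 * t) ^ (-(1:ℝ)/2) * L t := by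
        rw [himg]
    _ = ∫ u in Ioo (0:ℝ) 1, |f' u| •
          ((f u) ^ (-a - 1) * (1 + τ ^ 2 * (f u)) ^ (-(1:ℝ)/2) * L (f u)) :=
        integral_image_eq_integral_abs_deriv_smul measurableSet_Ioo hderiv hinj _
    _ = ∫ u in Ioo (0:ℝ) 1, τ ^ (2 * a) *
          (u ^ (a - 1/2) * (1 - u) ^ (-a - 1) * L ((1 / τ ^ 2) * (1 / u - 1))) := by
        apply setIntegral_congr_fun measurableSet_Ioo
        intro u hu
        obtain ⟨hu0, hu1⟩ := hu
        have h1u : (0:ℝ) < 1 - u := by linarith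
        have hu0' : u ≠ 0 := ne_of_gt hu0
        have e1 : f u = (1 - u) / (τ ^ 2 * u) := by rw [hf]; field_simp
        have e2 : 1 + τ ^ 2 * f u = u⁻¹ := by
          rw [hf]; dsimp only
          rw [← mul_assoc, mul_one_div_cancel hτ2.ne', one_mul, one_div]; ring
        have e3 : |f' u| = (τ ^ 2)⁻¹ * (u ^ 2)⁻¹ := by
          rw [hf']; dsimp only
          rw [abs_neg, abs_of_pos (by positivity)]
          ring
        have hτa : ((τ ^ 2 : ℝ)) ^ (-a - 1) = τ ^ (-(2 * a + 2)) := by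
          rw [← Real.rpow_natCast τ 2, ← Real.rpow_mul hτ.le]
          congr 1; push_cast; ring
        have hua : (u : ℝ) ^ (-a - 1) = u ^ (-(a + 1)) := by congr 1; ring
        have hA : ((1 - u) / (τ ^ 2 * u)) ^ (-a - 1)
            = (1 - u) ^ (-a - 1) * (τ ^ (2 * a + 2) * u ^ (a + 1)) := by
          rw [Real.div_rpow h1u.le (by positivity), Real.mul_rpow hτ2.le hu0.le,
            hτa, hua, Real.rpow_neg hτ.le, Real.rpow_neg hu0.le,
            div_eq_mul_inv, mul_inv, inv_inv, inv_inv]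
        have hB : (u⁻¹ : ℝ) ^ (-(1:ℝ)/2) = u ^ ((1:ℝ)/2) := by
          rw [Real.inv_rpow hu0.le, ← Real.rpow_neg hu0.le]
          norm_num
        have hD : (τ ^ 2 : ℝ)⁻¹ = τ ^ (-2 : ℝ) := by
          rw [← Real.rpow_natCast τ 2, ← Real.rpow_neg hτ.le]
          norm_num
        have hE : (u ^ 2 : ℝ)⁻¹ = u ^ (-2 : ℝ) := by
          rw [← Real.rpow_natCast u 2, ← Real.rpow_neg hu0.le]
          norm_num
        have ht2 : τ ^ (-2 : ℝ) * τ ^ (2 * a + 2) = τ ^ (2 * a) := by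
          rw [← Real.rpow_add hτ]; congr 1; ring
        have hu2 : u ^ (-2 : ℝ) * u ^ (a + 1) * u ^ ((1:ℝ)/2) = u ^ (a - 1/2) := by
          rw [← Real.rpow_add hu0, ← Real.rpow_add hu0]; congr 1; ring
        have hfLeq : L (f u) = L ((1 / τ ^ 2) * (1 / u - 1)) := rfl
        dsimp only
        rw [smul_eq_mul, e2, hfLeq, e1, e3, hA, hB, hD, hE, ← ht2, ← hu2]
        ring
    _ = τ ^ (2 * a) * ∫ u in Ioo (0:ℝ) 1,
          u ^ (a - 1/2) * (1 - u) ^ (-a - 1) * L ((1 / τ ^ 2) * (1 / u - 1)) :=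
        integral_const_mul _ _
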